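/- For a renaming ρ : Γ → Γ' ⊎ {□} and a name x ∈ Γ, the pair of monotone maps (apply, unapply) between the lattice of slices of (ρ, x) and the lattice of slices of ρ x forms a Galois connection: apply ∘ unapply ≥ id and unapply ∘ apply ≤ id. -/
import Mathlib


/-- Order on name slices with erasure: `□ ≤ z` for all `z`, and `z ≤ z`.
(`none` plays the role of the erased name `□`.) -/
def ole {α : Type*} (z w : Option α) : Prop := z = none ∨ z = w

/-- Pointwise order on (slices of) renamings `Γ → Γ' ⊎ {□}`. -/
def rleOpt {Γ Γ' : ℕ} (σ ρ : Fin Γ → Option (Fin Γ')) : Prop := ∀ y, ole (σ y) (ρ y)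

/-- `apply (σ, z)`: apply the renaming slice `σ` to the slice `z` of the name `x`:
`apply (σ, □) = □` and `apply (σ, x) = σ x`. -/
def renApp {Γ Γ' : ℕ} (σ : Fin Γ → Option (Fin Γ')) (x : Fin Γ)
    (z : Option (Fin Γ)) : Option (Fin Γ') :=
  if z = some x then σ x else none

/-- `ρ[x ↦ w]`: the least renaming slice mapping `x` to `w` (everything else to `□`). -/
def mapsTo {Γ Γ' : ℕ} (x : Fin Γ) (w : Option (Fin Γ')) : Fin Γ → Option (Fin Γ') :=
  fun y => if y = x then w else none

/-- `x⁻¹ w`: the least slice of `x` such that applying the renaming gives back `w`: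
`□` if `w = □`, and `x` otherwise. -/
def unappName {Γ Γ' : ℕ} (x : Fin Γ) (w : Option (Fin Γ')) : Option (Fin Γ) :=
  if w = none then none else some x

/-- for a renaming `ρ : Γ → Γ' ⊎ {□}` and a name `x ∈ Γ`, the pair of
monotone maps `apply : ↓(ρ, x) → ↓(ρ x)` and `unapply = w ↦ (ρ[x↦w], x⁻¹w)` forms a
Galois connection: `apply ∘ unapply ≥ id` and `unapply ∘ apply ≤ id`. -/
theorem renaming_application_galois (Γ Γ' : ℕ) (ρ : Fin Γ → Option (Fin Γ'))
    (x : Fin Γ) :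
    -- apply is monotone on slices of (ρ, x)
    (∀ σ σ' z z', rleOpt σ ρ → rleOpt σ' ρ → ole z (some x) → ole z' (some x) →
      rleOpt σ σ' → ole z z' → ole (renApp σ x z) (renApp σ' x z')) ∧
    -- unapply is monotone on slices of ρ x
    (∀ w w', ole w (ρ x) → ole w' (ρ x) → ole w w' →
      rleOpt (mapsTo x w) (mapsTo x w') ∧ ole (unappName x w) (unappName x w')) ∧
    -- apply ∘ unapply ≥ id on slices of ρ x
    (∀ w, ole w (ρ x) → ole w (renApp (mapsTo x w) x (unappName x w))) ∧
    -- unapply ∘ apply ≤ id on slices of (ρ, x)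
    (∀ σ z, rleOpt σ ρ → ole z (some x) →
      rleOpt (mapsTo x (renApp σ x z)) σ ∧ ole (unappName x (renApp σ x z)) z) := by
  refine ⟨?_, ?_, ?_, ?_⟩
  · rintro σ σ' z z' _ _ _ _ h hz
    unfold renApp
    rcases hz with hz | hz
    · subst hz; simp [ole]
    · subst hz
      split
      · exact h x
      · simp [ole]
  · rintro w w' _ _ hw
    rcases hw with hw | hw
    · subst hw
      constructor
      · intro y; unfold mapsTo; split <;> simp [ole]
      · simp [unappName, ole]
    · subst hw
      exact ⟨fun y => Or.inr rfl, Or.inr rfl⟩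
  · intro w _
    unfold renApp unappName mapsTo
    by_cases h : w = none
    · subst h; simp [ole]
    · simp [h, ole]
  · rintro σ z hσ hz
    constructor
    · intro y
      unfold mapsTo renApp
      by_cases hy : y = x
      · subst hy
        rcases hz with hz | hz
        · simp [hz, ole]
        · subst hz; simp [ole]
      · simp [hy, ole]
    · unfold unappName renApp
      rcases hz with hz | hz
      · simp [hz, ole]
      · subst hz
        by_cases h : σ x = none <;> simp [h, ole]
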